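/- Let p : ℝ^d → ℝ be twice continuously differentiable in a neighborhood of a point x, and let H be the Hessian matrix of p at x, with orthonormal eigenvectors v₁, …, v_d and eigenvalues λ₁ ≥ λ₂ ≥ … ≥ λ_d satisfying λ₂ < 0 and λ₁ > λ₂. Let e₁ be a unit vector satisfying ⟨v₁, e₁⟩² > λ₁/(λ₁ − λ₂), and assume the gradient of p at x is orthogonal to the hyperplane e₁⊥, i.e. ⟨∇p(x), u⟩ = 0 for every u orthogonal to e₁. Then x is a strict local maximum of p restricted to the affine subspace x + e₁⊥: there exists ε > 0 such that p(x + u) < p(x) for every u orthogonal to e₁ with 0 < ‖u‖ < ε. (Lemma 4: a sufficient condition for a point to be a local mode of p constrained to the subspace 𝕃 spanned by a basis [e₂,…,e_d] with unit normal e₁ is (v₁ᵀe₁)² > λ₁/(λ₁−λ₂), the constrained first-order condition being made explicit.) -/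

import Mathlib

open Matrix Topology

private lemma dp_sum_right {d : ℕ} (w : Fin d → ℝ) (c : Fin d → ℝ) (f : Fin d → Fin d → ℝ) :
    w ⬝ᵥ (∑ i, c i • f i) = ∑ i, c i * (w ⬝ᵥ f i) := by
  simp only [dotProduct, Finset.sum_apply, Pi.smul_apply, smul_eq_mul, Finset.mul_sum]
  rw [Finset.sum_comm]
  exact Finset.sum_congr rfl fun i _ => Finset.sum_congr rfl fun j _ => by ring

private lemma dp_sum_left {d : ℕ} (w : Fin d → ℝ) (c : Fin d → ℝ) (f : Fin d → Fin d → ℝ) :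
    (∑ i, c i • f i) ⬝ᵥ w = ∑ i, c i * (f i ⬝ᵥ w) := by
  rw [dotProduct_comm, dp_sum_right]
  exact Finset.sum_congr rfl fun i _ => by rw [dotProduct_comm]

/-- Lemma 4: let `p` be twice continuously differentiable near `x`, with Hessian `H`
at `x` (expressed via the second iterated Fréchet derivative), with orthonormal
eigenvectors `v i` and decreasing eigenvalues `lam i` satisfying `λ₂ < 0` and
`λ₁ > λ₂`. If `e₁` is a unit vector with `⟨v₁, e₁⟩² > λ₁/(λ₁ − λ₂)` and the gradient
of `p` at `x` vanishes on the hyperplane `e₁⊥`, then `x` is a strict local maximum of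
`p` restricted to the affine subspace `x + e₁⊥`. -/
theorem stmt8 (d : ℕ) (hd : 2 ≤ d) (p : (Fin d → ℝ) → ℝ) (x : Fin d → ℝ)
    (s : Set (Fin d → ℝ)) (hs : s ∈ 𝓝 x) (hp : ContDiffOn ℝ 2 p s)
    (H : Matrix (Fin d) (Fin d) ℝ) (hH : Hᵀ = H)
    (hHess : ∀ w u : Fin d → ℝ, iteratedFDeriv ℝ 2 p x ![w, u] = w ⬝ᵥ H.mulVec u)
    (v : Fin d → (Fin d → ℝ)) (lam : Fin d → ℝ)
    (horth : ∀ i j : Fin d, v i ⬝ᵥ v j = if i = j then 1 else 0)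
    (heig : ∀ i : Fin d, H.mulVec (v i) = lam i • v i)
    (hmono : Antitone lam)
    (hlam2 : lam ⟨1, by omega⟩ < 0)
    (hgap : lam ⟨0, by omega⟩ > lam ⟨1, by omega⟩)
    (e1 : Fin d → ℝ) (he1 : e1 ⬝ᵥ e1 = 1)
    (halign : (v ⟨0, by omega⟩ ⬝ᵥ e1) ^ 2 >
      lam ⟨0, by omega⟩ / (lam ⟨0, by omega⟩ - lam ⟨1, by omega⟩))
    (hgrad : ∀ u : Fin d → ℝ, e1 ⬝ᵥ u = 0 → fderiv ℝ p x u = 0) :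
    ∃ ε > 0, ∀ u : Fin d → ℝ, e1 ⬝ᵥ u = 0 → u ≠ 0 →
      Real.sqrt (u ⬝ᵥ u) < ε → p (x + u) < p x := by
  set i0 : Fin d := ⟨0, by omega⟩ with hi0
  set i1 : Fin d := ⟨1, by omega⟩ with hi1
  -- eigenbasis expansion
  haveI : Nonempty (Fin d) := ⟨i0⟩
  have hli : LinearIndependent ℝ v := by
    rw [Fintype.linearIndependent_iff]
    intro g hg i
    have h := congrArg (fun w => v i ⬝ᵥ w) hg
    simp only [dp_sum_right, horth, dotProduct_zero] at h
    simpa using h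
  let B := basisOfLinearIndependentOfCardEqFinrank hli
    (by simp [Module.finrank_fintype_fun_eq_card])
  have hBv : ∀ i, B i = v i := fun i =>
    congrFun (coe_basisOfLinearIndependentOfCardEqFinrank hli _) i
  have hexp : ∀ u : Fin d → ℝ, ∑ i, (v i ⬝ᵥ u) • v i = u := by
    intro u
    have h1 : ∑ i, (B.repr u i) • v i = u := by
      conv_rhs => rw [← B.sum_repr u]
      exact Finset.sum_congr rfl fun i _ => by rw [hBv]
    have hcoef : ∀ j, v j ⬝ᵥ u = B.repr u j := by
      intro j
      conv_lhs => rw [← h1]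
      rw [dp_sum_right]
      simp [horth]
    rw [show (fun i => (v i ⬝ᵥ u) • v i) = fun i => (B.repr u i) • v i from
      funext fun i => by rw [hcoef]] at *
    exact h1
  have hS : ∀ u : Fin d → ℝ, u ⬝ᵥ u = ∑ i, (v i ⬝ᵥ u) ^ 2 := by
    intro u
    have h := dp_sum_left u (fun i => v i ⬝ᵥ u) v
    rw [hexp u] at h
    rw [h]
    exact Finset.sum_congr rfl fun i _ => by rw [sq]
  have hQ : ∀ u : Fin d → ℝ, u ⬝ᵥ H.mulVec u = ∑ i, lam i * (v i ⬝ᵥ u) ^ 2 := by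
    intro u
    have hmv : H.mulVec u = ∑ i, (lam i * (v i ⬝ᵥ u)) • v i := by
      conv_lhs => rw [← hexp u]
      rw [← Matrix.mulVecLin_apply, map_sum]
      exact Finset.sum_congr rfl fun i _ => by
        rw [_root_.map_smul, Matrix.mulVecLin_apply, heig, smul_smul, mul_comm]
    rw [hmv, dp_sum_right]
    exact Finset.sum_congr rfl fun i _ => by rw [dotProduct_comm]; ring
  -- Cauchy-Schwarz bound on the first coefficient
  set κ : ℝ := v i0 ⬝ᵥ e1 with hκ
  have ha0 : ∀ u : Fin d → ℝ, e1 ⬝ᵥ u = 0 →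
      (v i0 ⬝ᵥ u) ^ 2 ≤ (1 - κ ^ 2) * (u ⬝ᵥ u) := by
    intro u hu
    set w : Fin d → ℝ := v i0 - κ • e1 with hw
    have hwu : w ⬝ᵥ u = v i0 ⬝ᵥ u := by
      simp [hw, sub_dotProduct, smul_dotProduct, hu]
    have hww : w ⬝ᵥ w = 1 - κ ^ 2 := by
      simp [hw, sub_dotProduct, dotProduct_sub, smul_dotProduct, dotProduct_smul,
        he1, horth, dotProduct_comm e1 (v i0), ← hκ]
      ring
    have cs : (w ⬝ᵥ u) ^ 2 ≤ (w ⬝ᵥ w) * (u ⬝ᵥ u) := by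
      simpa only [dotProduct, pow_two] using Finset.sum_mul_sq_le_sq_mul_sq Finset.univ w u
    rw [hwu, hww] at cs
    exact cs
  set δ : ℝ := lam i1 + (lam i0 - lam i1) * (1 - κ ^ 2) with hδ
  have hδneg : δ < 0 := by
    have h2 : lam i0 < κ ^ 2 * (lam i0 - lam i1) := (div_lt_iff₀ (by linarith)).mp halign
    nlinarith
  have hQbound : ∀ u : Fin d → ℝ, e1 ⬝ᵥ u = 0 →
      u ⬝ᵥ H.mulVec u ≤ δ * (u ⬝ᵥ u) := by
    intro u hu
    have hSnn : ∀ i, (0:ℝ) ≤ (v i ⬝ᵥ u) ^ 2 := fun i => sq_nonneg _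
    have hsum : ∑ i, lam i * (v i ⬝ᵥ u) ^ 2 ≤
        lam i0 * (v i0 ⬝ᵥ u) ^ 2 + lam i1 * ((u ⬝ᵥ u) - (v i0 ⬝ᵥ u) ^ 2) := by
      have herase : ∑ i ∈ Finset.univ.erase i0, (v i ⬝ᵥ u) ^ 2
          = (u ⬝ᵥ u) - (v i0 ⬝ᵥ u) ^ 2 := by
        rw [hS u, ← Finset.add_sum_erase _ _ (Finset.mem_univ i0)]
        ring
      have hterm : ∀ i ∈ Finset.univ.erase i0,
          lam i * (v i ⬝ᵥ u) ^ 2 ≤ lam i1 * (v i ⬝ᵥ u) ^ 2 := by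
        intro i hi
        apply mul_le_mul_of_nonneg_right _ (hSnn i)
        have hne : i ≠ i0 := Finset.ne_of_mem_erase hi
        have h1 : (1:ℕ) ≤ i.val := by
          rcases Nat.eq_zero_or_pos i.val with h | h
          · exact absurd (Fin.ext h) hne
          · exact h
        exact hmono (show i1 ≤ i from by simpa [Fin.le_def, hi1] using h1)
      calc ∑ i, lam i * (v i ⬝ᵥ u) ^ 2
          = lam i0 * (v i0 ⬝ᵥ u) ^ 2
            + ∑ i ∈ Finset.univ.erase i0, lam i * (v i ⬝ᵥ u) ^ 2 :=
            (Finset.add_sum_erase _ _ (Finset.mem_univ i0)).symm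
        _ ≤ lam i0 * (v i0 ⬝ᵥ u) ^ 2
            + lam i1 * ∑ i ∈ Finset.univ.erase i0, (v i ⬝ᵥ u) ^ 2 := by
            rw [Finset.mul_sum]
            exact add_le_add le_rfl (Finset.sum_le_sum hterm)
        _ = lam i0 * (v i0 ⬝ᵥ u) ^ 2 + lam i1 * ((u ⬝ᵥ u) - (v i0 ⬝ᵥ u) ^ 2) := by
            rw [herase]
    have hcs := ha0 u hu
    have hSpos : (0:ℝ) ≤ u ⬝ᵥ u := by
      rw [hS u]; exact Finset.sum_nonneg fun i _ => hSnn i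
    rw [hQ u]
    have hgap' : (0:ℝ) ≤ lam i0 - lam i1 := by linarith
    nlinarith [hcs, hsum]
  -- analytic part
  have hxo : x ∈ interior s := mem_interior_iff_mem_nhds.mpr hs
  have ht : IsOpen (interior s) := isOpen_interior
  have hpt : ContDiffOn ℝ 2 p (interior s) := hp.mono interior_subset
  set D2 : (Fin d → ℝ) → (Fin d → ℝ) →L[ℝ] (Fin d → ℝ) →L[ℝ] ℝ :=
    fun y => fderiv ℝ (fderiv ℝ p) y with hD2
  have hC1 : ContDiffOn ℝ 1 (fderiv ℝ p) (interior s) :=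
    hpt.fderiv_of_isOpen ht (by norm_num)
  have hcontD2 : ContinuousOn D2 (interior s) :=
    (hC1.fderiv_of_isOpen (m := 0) ht (by norm_num)).continuousOn
  have hcx : ContinuousAt D2 x := hcontD2.continuousAt (ht.mem_nhds hxo)
  obtain ⟨r1, hr1pos, hr1⟩ := Metric.isOpen_iff.mp ht x hxo
  have hδ2 : (0:ℝ) < -δ/2 := by linarith
  have hev : ∀ᶠ y in 𝓝 x, ‖D2 y - D2 x‖ < -δ/2 :=
    hcx.eventually (eventually_norm_sub_lt (D2 x) hδ2)
  obtain ⟨r2, hr2pos, hr2⟩ := Metric.eventually_nhds_iff.mp hev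
  refine ⟨min r1 r2, lt_min hr1pos hr2pos, ?_⟩
  intro u hu hu0 hulen
  have hSuu : (0:ℝ) < u ⬝ᵥ u := by
    obtain ⟨i, hi⟩ := Function.ne_iff.mp hu0
    have hi' : u i ≠ 0 := by simpa using hi
    rw [show u ⬝ᵥ u = ∑ j, u j * u j from rfl]
    exact Finset.sum_pos' (fun j _ => mul_self_nonneg _)
      ⟨i, Finset.mem_univ i, mul_self_pos.mpr hi'⟩
  have hnorm_le : ‖u‖ ≤ Real.sqrt (u ⬝ᵥ u) := by
    rw [pi_norm_le_iff_of_nonneg (Real.sqrt_nonneg _)]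
    intro i
    rw [Real.norm_eq_abs, ← Real.sqrt_sq_eq_abs]
    apply Real.sqrt_le_sqrt
    have : (u i)^2 = u i * u i := sq (u i)
    rw [this]
    exact Finset.single_le_sum (f := fun j => u j * u j)
      (fun j _ => mul_self_nonneg _) (Finset.mem_univ i)
  have hnormsq : ‖u‖ ^ 2 ≤ u ⬝ᵥ u := by
    have h1 : ‖u‖ ^ 2 ≤ Real.sqrt (u ⬝ᵥ u) ^ 2 :=
      pow_le_pow_left₀ (norm_nonneg _) hnorm_le 2
    rwa [Real.sq_sqrt hSuu.le] at h1
  have hnlt : ‖u‖ < min r1 r2 := lt_of_le_of_lt hnorm_le hulen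
  -- points on the segment
  set y : ℝ → (Fin d → ℝ) := fun τ => x + τ • u with hy
  have hyball : ∀ τ ∈ Set.Icc (0:ℝ) 1, y τ ∈ interior s ∧ dist (y τ) x < r2 := by
    intro τ hτ
    have hdist : dist (y τ) x < min r1 r2 := by
      rw [hy]
      simp only [dist_eq_norm, add_sub_cancel_left]
      calc ‖τ • u‖ = |τ| * ‖u‖ := by rw [norm_smul, Real.norm_eq_abs]
        _ ≤ 1 * ‖u‖ := by
            apply mul_le_mul_of_nonneg_right _ (norm_nonneg u)
            rw [abs_le]; constructor <;> linarith [hτ.1, hτ.2]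
        _ = ‖u‖ := one_mul _
        _ < min r1 r2 := hnlt
    exact ⟨hr1 (lt_of_lt_of_le hdist (min_le_left _ _)),
      lt_of_lt_of_le hdist (min_le_right _ _)⟩
  -- the second derivative along the segment is negative
  have hD2x : (D2 x) u u = u ⬝ᵥ H.mulVec u := by
    have := hHess u u
    rw [iteratedFDeriv_two_apply] at this
    simpa using this
  have hD2neg : ∀ τ ∈ Set.Icc (0:ℝ) 1, (D2 (y τ)) u u < 0 := by
    intro τ hτ
    obtain ⟨hmem, hdist⟩ := hyball τ hτ
    have hop : ‖D2 (y τ) - D2 x‖ < -δ/2 := hr2 hdist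
    have hub : ((D2 (y τ) - D2 x) u) u ≤ (-δ/2) * (u ⬝ᵥ u) := by
      calc ((D2 (y τ) - D2 x) u) u ≤ ‖((D2 (y τ) - D2 x) u) u‖ := le_abs_self _
        _ ≤ ‖(D2 (y τ) - D2 x) u‖ * ‖u‖ := ContinuousLinearMap.le_opNorm _ _
        _ ≤ (‖D2 (y τ) - D2 x‖ * ‖u‖) * ‖u‖ := by
            gcongr
            exact ContinuousLinearMap.le_opNorm _ _
        _ = ‖D2 (y τ) - D2 x‖ * ‖u‖ ^ 2 := by ring
        _ ≤ (-δ/2) * (u ⬝ᵥ u) := by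
            apply mul_le_mul hop.le hnormsq (sq_nonneg _) hδ2.le
    have heq : ((D2 (y τ) - D2 x) u) u = (D2 (y τ)) u u - (D2 x) u u := by
      rw [ContinuousLinearMap.sub_apply, ContinuousLinearMap.sub_apply]
    rw [heq, hD2x] at hub
    have hQb := hQbound u hu
    have hprod : δ/2 * (u ⬝ᵥ u) < 0 :=
      mul_neg_of_neg_of_pos (by linarith) hSuu
    calc ((D2 (y τ)) u) u
        = (u ⬝ᵥ H.mulVec u) + (((D2 (y τ)) u) u - u ⬝ᵥ H.mulVec u) := by ring
      _ ≤ δ * (u ⬝ᵥ u) + (-δ/2) * (u ⬝ᵥ u) := add_le_add hQb hub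
      _ = δ/2 * (u ⬝ᵥ u) := by ring
      _ < 0 := hprod
  -- derivatives of the composed maps
  have hline : ∀ τ : ℝ, HasDerivAt (fun τ : ℝ => x + τ • u) u τ := by
    intro τ
    have h1 : HasDerivAt (fun τ : ℝ => τ • u) ((1:ℝ) • u) τ :=
      (hasDerivAt_id τ).smul_const u
    simpa using h1.const_add x
  have hdiff : ∀ τ ∈ Set.Icc (0:ℝ) 1, DifferentiableAt ℝ p (y τ) := by
    intro τ hτ
    exact (hpt.differentiableOn two_ne_zero).differentiableAt
      (ht.mem_nhds (hyball τ hτ).1)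
  set g1 : ℝ → ℝ := fun τ => fderiv ℝ p (y τ) u with hg1def
  have hg : ∀ τ ∈ Set.Icc (0:ℝ) 1, HasDerivAt (fun τ => p (y τ)) (g1 τ) τ := by
    intro τ hτ
    exact ((hdiff τ hτ).hasFDerivAt.comp_hasDerivAt τ (hline τ))
  have hg1 : ∀ τ ∈ Set.Icc (0:ℝ) 1, HasDerivAt g1 ((D2 (y τ)) u u) τ := by
    intro τ hτ
    have hfd : DifferentiableAt ℝ (fderiv ℝ p) (y τ) :=
      (hC1.differentiableOn one_ne_zero).differentiableAt (ht.mem_nhds (hyball τ hτ).1)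
    have hcurve : HasDerivAt (fun τ => fderiv ℝ p (y τ)) ((D2 (y τ)) u) τ :=
      hfd.hasFDerivAt.comp_hasDerivAt τ (hline τ)
    have h := hcurve.clm_apply (hasDerivAt_const τ u)
    have h2 : (D2 (y τ)) u u + (fderiv ℝ p (y τ)) 0 = (D2 (y τ)) u u := by
      rw [map_zero, add_zero]
    rw [← h2]
    exact h
  -- conclude via strict antitonicity
  have hg1cont : ContinuousOn g1 (Set.Icc 0 1) :=
    fun τ hτ => ((hg1 τ hτ).continuousAt).continuousWithinAt
  have hg1anti : StrictAntiOn g1 (Set.Icc 0 1) := by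
    apply strictAntiOn_of_deriv_neg (convex_Icc 0 1) hg1cont
    intro τ hτ
    rw [interior_Icc] at hτ
    have hτ' : τ ∈ Set.Icc (0:ℝ) 1 := Set.Ioo_subset_Icc_self hτ
    rw [(hg1 τ hτ').deriv]
    exact hD2neg τ hτ'
  have hg1zero : g1 0 = 0 := by
    rw [hg1def]
    simp only [hy, zero_smul, add_zero]
    exact hgrad u hu
  have hgcont : ContinuousOn (fun τ => p (y τ)) (Set.Icc 0 1) :=
    fun τ hτ => ((hg τ hτ).continuousAt).continuousWithinAt
  have hganti : StrictAntiOn (fun τ => p (y τ)) (Set.Icc 0 1) := by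
    apply strictAntiOn_of_deriv_neg (convex_Icc 0 1) hgcont
    intro τ hτ
    rw [interior_Icc] at hτ
    have hτ' : τ ∈ Set.Icc (0:ℝ) 1 := Set.Ioo_subset_Icc_self hτ
    rw [(hg τ hτ').deriv]
    calc g1 τ < g1 0 := hg1anti (Set.left_mem_Icc.mpr zero_le_one) hτ' hτ.1
      _ = 0 := hg1zero
  have := hganti (Set.left_mem_Icc.mpr zero_le_one)
    (Set.right_mem_Icc.mpr zero_le_one) zero_lt_one
  simpa [hy] using this
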